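/- Under the setting of exact DANE on quadratics: with H ≻ 0, H̃⁻¹ := (1/K)∑ₖ(H_k + μI)⁻¹, ŵ = −H⁻¹l, and exact local solutions ŵ_kᵗ = wᵗ⁻¹ − η(H_k + μI)⁻¹(Hwᵗ⁻¹ + l), the averaged iterate wᵗ = (1/K)∑ₖ ŵ_kᵗ satisfies ‖wᵗ − ŵ‖ ≤ ‖I − ηH̃⁻¹H‖·‖wᵗ⁻¹ − ŵ‖. -/

import Mathlib

noncomputable def opNorm {d : ℕ} (A : Matrix (Fin d) (Fin d) ℝ) : ℝ :=
  ‖(Matrix.toEuclideanCLM (𝕜 := ℝ) A : EuclideanSpace ℝ (Fin d) →L[ℝ] EuclideanSpace ℝ (Fin d))‖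

noncomputable def mv {d : ℕ} (A : Matrix (Fin d) (Fin d) ℝ) (x : EuclideanSpace ℝ (Fin d)) :
    EuclideanSpace ℝ (Fin d) :=
  Matrix.toEuclideanCLM (𝕜 := ℝ) A x

theorem stmt_10 {d K : ℕ} (hK : 0 < K)
    (Hk : Fin K → Matrix (Fin d) (Fin d) ℝ) (hsymm : ∀ k, (Hk k).IsSymm)
    (μ : ℝ) (hμ : 0 ≤ μ)
    (hinv : ∀ k, IsUnit (Hk k + μ • (1 : Matrix (Fin d) (Fin d) ℝ)))
    (H : Matrix (Fin d) (Fin d) ℝ) (hH : H = (1 / (K : ℝ)) • ∑ k, Hk k)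
    (hHpd : H.PosDef)
    (Htilinv : Matrix (Fin d) (Fin d) ℝ)
    (hHtil : Htilinv = (1 / (K : ℝ)) • ∑ k, (Hk k + μ • (1 : Matrix (Fin d) (Fin d) ℝ))⁻¹)
    (l : EuclideanSpace ℝ (Fin d)) (what : EuclideanSpace ℝ (Fin d))
    (hwhat : what = -(mv H⁻¹ l))
    (η : ℝ) (hη : 0 < η)
    (wprev : EuclideanSpace ℝ (Fin d))
    (wk : Fin K → EuclideanSpace ℝ (Fin d))
    (hwk : ∀ k, wk k = wprev - η • mv (Hk k + μ • (1 : Matrix (Fin d) (Fin d) ℝ))⁻¹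
        (mv H wprev + l))
    (wt : EuclideanSpace ℝ (Fin d)) (hwt : wt = (1 / (K : ℝ)) • ∑ k, wk k) :
    ‖wt - what‖ ≤ opNorm (1 - η • (Htilinv * H)) * ‖wprev - what‖ := by
  have hHunit : IsUnit H := by
    rw [Matrix.isUnit_iff_isUnit_det]
    exact isUnit_iff_ne_zero.mpr hHpd.det_pos.ne'
  have hHl : mv H what = -l := by
    rw [hwhat]
    show Matrix.toEuclideanCLM (𝕜 := ℝ) H (-(Matrix.toEuclideanCLM (𝕜 := ℝ) H⁻¹ l)) = -l
    rw [map_neg]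
    congr 1
    have : Matrix.toEuclideanCLM (𝕜 := ℝ) H (Matrix.toEuclideanCLM (𝕜 := ℝ) H⁻¹ l)
        = Matrix.toEuclideanCLM (𝕜 := ℝ) (H * H⁻¹) l := by
      rw [map_mul]; rfl
    rw [this, Matrix.mul_nonsing_inv _ ((Matrix.isUnit_iff_isUnit_det H).mp hHunit), map_one]
    rfl
  have hgrad : mv H wprev + l = mv H (wprev - what) := by
    show _ = Matrix.toEuclideanCLM (𝕜 := ℝ) H (wprev - what)
    rw [map_sub]
    show _ = mv H wprev - mv H what
    rw [hHl]
    abel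
  have hwt' : wt = wprev - η • mv Htilinv (mv H (wprev - what)) := by
    rw [hwt]
    have : ∀ k, wk k = wprev - η • mv (Hk k + μ • (1 : Matrix (Fin d) (Fin d) ℝ))⁻¹
        (mv H (wprev - what)) := fun k => by rw [hwk k, hgrad]
    simp only [this, Finset.sum_sub_distrib, Finset.sum_const, Finset.card_univ,
      Fintype.card_fin, smul_sub]
    have hK' : (K : ℝ) ≠ 0 := Nat.cast_ne_zero.mpr hK.ne'
    congr 1
    · rw [← Nat.cast_smul_eq_nsmul ℝ, smul_smul, one_div, inv_mul_cancel₀ hK', one_smul]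
    · rw [hHtil]
      show (1 / (K : ℝ)) • ∑ k, η • (Matrix.toEuclideanCLM (𝕜 := ℝ)
          (Hk k + μ • (1 : Matrix (Fin d) (Fin d) ℝ))⁻¹) (mv H (wprev - what))
        = η • (Matrix.toEuclideanCLM (𝕜 := ℝ) ((1 / (K : ℝ)) •
          ∑ k, (Hk k + μ • (1 : Matrix (Fin d) (Fin d) ℝ))⁻¹)) (mv H (wprev - what))
      rw [map_smul, map_sum]
      simp only [ContinuousLinearMap.coe_smul', ContinuousLinearMap.coe_sum',
        Pi.smul_apply, Finset.sum_apply]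
      rw [← Finset.smul_sum, smul_comm]
  have key : wt - what = mv (1 - η • (Htilinv * H)) (wprev - what) := by
    have eM : Matrix.toEuclideanCLM (𝕜 := ℝ) (1 - η • (Htilinv * H))
        = 1 - η • (Matrix.toEuclideanCLM (𝕜 := ℝ) Htilinv * Matrix.toEuclideanCLM (𝕜 := ℝ) H) := by
      rw [map_sub, map_smul, map_mul, map_one]
    show _ = Matrix.toEuclideanCLM (𝕜 := ℝ) (1 - η • (Htilinv * H)) (wprev - what)
    rw [eM]
    simp only [ContinuousLinearMap.sub_apply, ContinuousLinearMap.one_apply,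
      ContinuousLinearMap.coe_smul', Pi.smul_apply, ContinuousLinearMap.coe_mul,
      Function.comp_apply]
    rw [hwt']
    show wprev - η • mv Htilinv (mv H (wprev - what)) - what = _
    unfold mv
    abel_nf
    rfl
  rw [key]
  exact (Matrix.toEuclideanCLM (𝕜 := ℝ) (1 - η • (Htilinv * H))).le_opNorm _
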